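/- arXiv:1506.07937 — 2 statements merged into one kernel-verified Lean document; each statement's English description precedes it below -/
import Mathlib

section
/- For positive definite A, B ∈ Sym(n): |A^{1/2} − B^{1/2}| ≤ (λ_min(A)^{1/2} + λ_min(B)^{1/2})⁻¹ · |A − B|, where |·| is the spectral norm and A^{1/2} is the positive definite square root. -/
/-- The spectral norm (operator norm w.r.t. the Euclidean norm) of a real matrix. -/
noncomputable def specNorm {m : Type*} [Fintype m] [DecidableEq m]
    (A : Matrix m m ℝ) : ℝ :=
  ‖LinearMap.toContinuousLinearMap (Matrix.toEuclideanLin A)‖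

/-- smallest eigenvalue of a Hermitian matrix -/
noncomputable def lambdaMin {n : ℕ} (hn : 0 < n) {A : Matrix (Fin n) (Fin n) ℝ}
    (hA : A.IsHermitian) : ℝ :=
  Finset.univ.inf' (Finset.univ_nonempty_iff.mpr ⟨⟨0, hn⟩⟩) hA.eigenvalues

/-- The square root of a positive semidefinite matrix, as `Matrix.PosSemidef.sqrt` was defined
in Mathlib of December 2024 (since removed from Mathlib). -/
noncomputable def Matrix.PosSemidef.sqrt {n : Type*} [Fintype n] [DecidableEq n]
    {A : Matrix n n ℝ} (hA : A.PosSemidef) : Matrix n n ℝ :=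
  hA.1.eigenvectorUnitary.1 * Matrix.diagonal ((↑) ∘ (√·) ∘ hA.1.eigenvalues) *
    (star hA.1.eigenvectorUnitary : Matrix n n ℝ)

open scoped Matrix.Norms.L2Operator RealInnerProductSpace
open Matrix

namespace SqrtLipAux

variable {n : ℕ}

lemma conj_diag_sub_smul {A : Matrix (Fin n) (Fin n) ℝ} (hA : A.IsHermitian)
    (f : Fin n → ℝ) (c : ℝ) (hcf : ∀ i, c ≤ f i) :
    (((hA.eigenvectorUnitary : Matrix (Fin n) (Fin n) ℝ) * Matrix.diagonal f *
      star (hA.eigenvectorUnitary : Matrix (Fin n) (Fin n) ℝ)) - c • 1).PosSemidef := by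
  set U : Matrix (Fin n) (Fin n) ℝ := (hA.eigenvectorUnitary : Matrix (Fin n) (Fin n) ℝ)
  have hU : U * star U = 1 := Matrix.mem_unitaryGroup_iff.mp hA.eigenvectorUnitary.2
  have h1 : (c • 1 : Matrix (Fin n) (Fin n) ℝ) = U * Matrix.diagonal (fun _ => c) * star U := by
    rw [← Matrix.smul_one_eq_diagonal, Matrix.mul_smul, mul_one, Matrix.smul_mul, hU]
  rw [h1, ← Matrix.sub_mul, ← Matrix.mul_sub]
  have hds : Matrix.diagonal f - Matrix.diagonal (fun _ => c) = Matrix.diagonal (fun i => f i - c) :=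
    Matrix.diagonal_sub f (fun _ => c)
  rw [hds]
  have hd : (Matrix.diagonal (fun i => f i - c)).PosSemidef :=
    Matrix.posSemidef_diagonal_iff.mpr fun i => sub_nonneg.mpr (hcf i)
  simpa [Matrix.star_eq_conjTranspose] using hd.mul_mul_conjTranspose_same U

lemma qform_ge {M : Matrix (Fin n) (Fin n) ℝ} {c : ℝ} (h : (M - c • 1).PosSemidef)
    (v : Fin n → ℝ) : c * (v ⬝ᵥ v) ≤ v ⬝ᵥ M *ᵥ v := by
  have h2 := h.dotProduct_mulVec_nonneg v
  simp only [star_trivial, Matrix.sub_mulVec, Matrix.smul_mulVec, Matrix.one_mulVec,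
    dotProduct_sub, dotProduct_smul, smul_eq_mul] at h2
  linarith

lemma sqrt_eq' {A : Matrix (Fin n) (Fin n) ℝ} (hA : A.PosSemidef) :
    hA.sqrt = (hA.1.eigenvectorUnitary : Matrix (Fin n) (Fin n) ℝ) *
      Matrix.diagonal (fun i => Real.sqrt (hA.1.eigenvalues i)) *
      star (hA.1.eigenvectorUnitary : Matrix (Fin n) (Fin n) ℝ) := by
  rw [Matrix.PosSemidef.sqrt]
  norm_num [Function.comp_def]

lemma sqrt_isHermitian' {A : Matrix (Fin n) (Fin n) ℝ} (hA : A.PosSemidef) :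
    hA.sqrt.IsHermitian := by
  have := conj_diag_sub_smul hA.1 (fun i => Real.sqrt (hA.1.eigenvalues i)) 0
    (fun i => Real.sqrt_nonneg _)
  rw [zero_smul, sub_zero, ← sqrt_eq'] at this
  exact this.1

lemma sqrt_mul_self' {A : Matrix (Fin n) (Fin n) ℝ} (hA : A.PosSemidef) :
    hA.sqrt * hA.sqrt = A := by
  rw [sqrt_eq']
  set U : Matrix (Fin n) (Fin n) ℝ := (hA.1.eigenvectorUnitary : Matrix (Fin n) (Fin n) ℝ)
  have hU : star U * U = 1 := Matrix.mem_unitaryGroup_iff'.mp hA.1.eigenvectorUnitary.2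
  calc U * Matrix.diagonal (fun i => Real.sqrt (hA.1.eigenvalues i)) * star U *
        (U * Matrix.diagonal (fun i => Real.sqrt (hA.1.eigenvalues i)) * star U)
      = U * (Matrix.diagonal (fun i => Real.sqrt (hA.1.eigenvalues i)) * (star U * U) *
          Matrix.diagonal (fun i => Real.sqrt (hA.1.eigenvalues i))) * star U := by
        simp only [mul_assoc]
    _ = U * Matrix.diagonal hA.1.eigenvalues * star U := by
        rw [hU, mul_one, Matrix.diagonal_mul_diagonal]
        congr 3
        funext i
        exact Real.mul_self_sqrt (hA.eigenvalues_nonneg i)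
    _ = A := by
        conv_rhs => rw [hA.1.spectral_theorem, Unitary.conjStarAlgAut_apply]
        simp [Function.comp_def, U]

lemma norm_le_of_eigen {X : Matrix (Fin n) (Fin n) ℝ} (hX : X.IsHermitian)
    {M : ℝ} (hM : 0 ≤ M) (h : ∀ i, |hX.eigenvalues i| ≤ M) :
    ‖LinearMap.toContinuousLinearMap (Matrix.toEuclideanLin X)‖ ≤ M := by
  apply ContinuousLinearMap.opNorm_le_bound _ hM
  intro w
  simp only [LinearMap.coe_toContinuousLinearMap']
  set b := hX.eigenvectorBasis with hb
  have hsym : (Matrix.toEuclideanLin X).IsSymmetric :=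
    Matrix.isHermitian_iff_isSymmetric.mp hX
  have hrepr : ∀ i, b.repr (Matrix.toEuclideanLin X w) i =
      hX.eigenvalues i * b.repr w i := by
    intro i
    rw [OrthonormalBasis.repr_apply_apply, OrthonormalBasis.repr_apply_apply,
      ← hsym (b i) w]
    have hbv : Matrix.toEuclideanLin X (b i) = hX.eigenvalues i • b i := by
      apply (WithLp.equiv 2 (Fin n → ℝ)).injective
      simpa using hX.mulVec_eigenvectorBasis i
    rw [hbv, real_inner_smul_left]
  rw [← b.repr.norm_map (Matrix.toEuclideanLin X w), ← b.repr.norm_map w]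
  rw [EuclideanSpace.norm_eq, EuclideanSpace.norm_eq]
  rw [← Real.sqrt_sq hM, ← Real.sqrt_mul (by positivity)]
  apply Real.sqrt_le_sqrt
  rw [Finset.mul_sum]
  apply Finset.sum_le_sum
  intro i _
  rw [hrepr i]
  simp only [Real.norm_eq_abs, sq_abs]
  rw [mul_pow]
  apply mul_le_mul_of_nonneg_right _ (sq_nonneg _)
  exact sq_le_sq' (neg_le_of_abs_le (h i)) (le_of_abs_le (h i))

end SqrtLipAux

open SqrtLipAux

theorem stmt_10 (n : ℕ) (hn : 0 < n) (A B : Matrix (Fin n) (Fin n) ℝ)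
    (hA : A.PosDef) (hB : B.PosDef) :
    specNorm (hA.posSemidef.sqrt - hB.posSemidef.sqrt) ≤
      (Real.sqrt (lambdaMin hn hA.isHermitian) +
        Real.sqrt (lambdaMin hn hB.isHermitian))⁻¹ * specNorm (A - B) := by
  classical
  set SA := hA.posSemidef.sqrt with hSAdef
  set SB := hB.posSemidef.sqrt with hSBdef
  set X := SA - SB with hXdef
  have hXh : X.IsHermitian :=
    (sqrt_isHermitian' hA.posSemidef).sub (sqrt_isHermitian' hB.posSemidef)
  set μ := hXh.eigenvalues with hμdef
  obtain ⟨i0, -, hi0⟩ := Finset.exists_max_image Finset.univ (fun i => |μ i|)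
    ⟨⟨0, hn⟩, Finset.mem_univ _⟩
  set cA := Real.sqrt (lambdaMin hn hA.isHermitian) with hcAdef
  set cB := Real.sqrt (lambdaMin hn hB.isHermitian) with hcBdef
  have hlA : 0 < lambdaMin hn hA.isHermitian := by
    rw [lambdaMin, Finset.lt_inf'_iff]
    exact fun i _ => hA.eigenvalues_pos i
  have hlB : 0 < lambdaMin hn hB.isHermitian := by
    rw [lambdaMin, Finset.lt_inf'_iff]
    exact fun i _ => hB.eigenvalues_pos i
  have hcA : 0 < cA := Real.sqrt_pos.mpr hlA
  have hcB : 0 < cB := Real.sqrt_pos.mpr hlB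
  have hc : 0 < cA + cB := by linarith
  -- sqrt A dominates cA • 1
  have hsqA : (SA - cA • 1).PosSemidef := by
    have h1 : SA = (hA.isHermitian.eigenvectorUnitary : Matrix (Fin n) (Fin n) ℝ) *
        Matrix.diagonal (fun i => Real.sqrt (hA.isHermitian.eigenvalues i)) *
        star (hA.isHermitian.eigenvectorUnitary : Matrix (Fin n) (Fin n) ℝ) := by
      rw [hSAdef, Matrix.PosSemidef.sqrt]
      norm_num [Function.comp_def]
    rw [h1]
    exact conj_diag_sub_smul hA.isHermitian _ _
      (fun i => Real.sqrt_le_sqrt (Finset.inf'_le _ (Finset.mem_univ i)))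
  have hsqB : (SB - cB • 1).PosSemidef := by
    have h1 : SB = (hB.isHermitian.eigenvectorUnitary : Matrix (Fin n) (Fin n) ℝ) *
        Matrix.diagonal (fun i => Real.sqrt (hB.isHermitian.eigenvalues i)) *
        star (hB.isHermitian.eigenvectorUnitary : Matrix (Fin n) (Fin n) ℝ) := by
      rw [hSBdef, Matrix.PosSemidef.sqrt]
      norm_num [Function.comp_def]
    rw [h1]
    exact conj_diag_sub_smul hB.isHermitian _ _
      (fun i => Real.sqrt_le_sqrt (Finset.inf'_le _ (Finset.mem_univ i)))
  -- eigenvector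
  set w : EuclideanSpace ℝ (Fin n) := hXh.eigenvectorBasis i0 with hwdef
  set v : Fin n → ℝ := WithLp.equiv 2 (Fin n → ℝ) w with hvdef
  have hXv : X *ᵥ v = μ i0 • v := hXh.mulVec_eigenvectorBasis i0
  have hw1 : ‖w‖ = 1 := hXh.eigenvectorBasis.orthonormal.1 i0
  have hvv : v ⬝ᵥ v = 1 := by
    have h2 : (inner ℝ w w : ℝ) = v ⬝ᵥ v := by
      rw [EuclideanSpace.inner_eq_star_dotProduct]; rfl
    rw [← h2, real_inner_self_eq_norm_sq, hw1, one_pow]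
  have hqA : cA ≤ v ⬝ᵥ SA *ᵥ v := by
    have := qform_ge hsqA v
    rwa [hvv, mul_one] at this
  have hqB : cB ≤ v ⬝ᵥ SB *ᵥ v := by
    have := qform_ge hsqB v
    rwa [hvv, mul_one] at this
  -- A - B = SA * X + X * SB
  have hABX : A - B = SA * X + X * SB := by
    have h2 : SA * SA = A := sqrt_mul_self' hA.posSemidef
    have h3 : SB * SB = B := sqrt_mul_self' hB.posSemidef
    rw [hXdef, mul_sub, sub_mul, h2, h3]
    abel
  -- quadratic form identity
  have hXu : ∀ u : Fin n → ℝ, v ⬝ᵥ X *ᵥ u = μ i0 * (v ⬝ᵥ u) := by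
    intro u
    have hXt : Xᵀ = X := by
      have h6 := hXh
      rwa [Matrix.IsHermitian, Matrix.conjTranspose_eq_transpose_of_trivial] at h6
    rw [Matrix.dotProduct_mulVec, ← Matrix.mulVec_transpose, hXt, hXv,
      smul_dotProduct, smul_eq_mul]
  have hq : v ⬝ᵥ (A - B) *ᵥ v = μ i0 * (v ⬝ᵥ SA *ᵥ v + v ⬝ᵥ SB *ᵥ v) := by
    rw [hABX, Matrix.add_mulVec, dotProduct_add, ← Matrix.mulVec_mulVec,
      ← Matrix.mulVec_mulVec, hXv, Matrix.mulVec_smul, dotProduct_smul,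
      hXu (SB *ᵥ v), smul_eq_mul, mul_add]
  -- bound on quadratic form of A - B
  have hbound : |v ⬝ᵥ (A - B) *ᵥ v| ≤ specNorm (A - B) := by
    have h2 : v ⬝ᵥ (A - B) *ᵥ v = (inner ℝ w (Matrix.toEuclideanLin (A - B) w) : ℝ) := by
      rw [dotProduct_comm]; rfl
    rw [h2]
    calc |(inner ℝ w (Matrix.toEuclideanLin (A - B) w) : ℝ)|
        ≤ ‖w‖ * ‖Matrix.toEuclideanLin (A - B) w‖ := abs_real_inner_le_norm _ _
      _ = ‖Matrix.toEuclideanLin (A - B) w‖ := by rw [hw1, one_mul]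
      _ ≤ ‖A - B‖ * ‖w‖ := Matrix.l2_opNorm_mulVec (A - B) w
      _ = specNorm (A - B) := by rw [hw1, mul_one]; rfl
  have hμb : |μ i0| * (cA + cB) ≤ specNorm (A - B) := by
    have h4 : 0 ≤ v ⬝ᵥ SA *ᵥ v + v ⬝ᵥ SB *ᵥ v := by linarith
    calc |μ i0| * (cA + cB) ≤ |μ i0| * (v ⬝ᵥ SA *ᵥ v + v ⬝ᵥ SB *ᵥ v) :=
          mul_le_mul_of_nonneg_left (by linarith) (abs_nonneg _)
      _ = |v ⬝ᵥ (A - B) *ᵥ v| := by rw [hq, abs_mul, abs_of_nonneg h4]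
      _ ≤ specNorm (A - B) := hbound
  have hfin : specNorm X ≤ |μ i0| :=
    norm_le_of_eigen hXh (abs_nonneg _) (fun i => hi0 i (Finset.mem_univ i))
  calc specNorm X ≤ |μ i0| := hfin
    _ ≤ (cA + cB)⁻¹ * specNorm (A - B) := by
        rw [le_inv_mul_iff₀ hc, mul_comm]
        exact hμb
end

section
/- Let p, g, Δ ∈ ℝⁿ, α ≥ 0, m ∈ (0,1), w = ½|p|² + α, v = −(|p|² + α), β ∈ ℝ with −β − gᵀp ≥ m·v, and c = max(|g|, |p|, √α). Define Q(ν) := ½|ν g + (1−ν)(p+Δ)|² + νβ + (1−ν)α. Then min_{ν∈[0,1]} Q(ν) ≤ w − w²·(1−m)²/(8c²) + 4c|Δ| + ½|Δ|². -/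
open RealInnerProductSpace

set_option maxHeartbeats 1600000 in
theorem stmt_16 (n : ℕ) (p g Δ : EuclideanSpace ℝ (Fin n))
    (α β m w v c : ℝ) (hα : 0 ≤ α) (hm : 0 < m) (hm1 : m < 1)
    (hw : w = (1 / 2) * ‖p‖ ^ 2 + α)
    (hv : v = -(‖p‖ ^ 2 + α))
    (hβ : -β - ⟪g, p⟫ ≥ m * v)
    (hc : c = max ‖g‖ (max ‖p‖ (Real.sqrt α))) :
    sInf ((fun ν : ℝ =>
        (1 / 2) * ‖ν • g + (1 - ν) • (p + Δ)‖ ^ 2 + ν * β + (1 - ν) * α) ''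
      Set.Icc 0 1) ≤
      w - w ^ 2 * (1 - m) ^ 2 / (8 * c ^ 2) + 4 * c * ‖Δ‖ + (1 / 2) * ‖Δ‖ ^ 2 := by
  have hw0 : 0 ≤ w := by rw [hw]; positivity
  have hgc : ‖g‖ ≤ c := hc ▸ le_max_left _ _
  have hpc : ‖p‖ ≤ c := hc ▸ le_trans (le_max_left _ _) (le_max_right _ _)
  have hsc : Real.sqrt α ≤ c := hc ▸ le_trans (le_max_right _ _) (le_max_right _ _)
  have hc0 : 0 ≤ c := le_trans (norm_nonneg g) hgc
  have hac : α ≤ c ^ 2 := by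
    have := Real.sq_sqrt hα
    nlinarith [Real.sqrt_nonneg α]
  -- boundedness from below
  have hbdd : BddBelow ((fun ν : ℝ =>
      (1 / 2) * ‖ν • g + (1 - ν) • (p + Δ)‖ ^ 2 + ν * β + (1 - ν) * α) ''
      Set.Icc 0 1) := by
    refine ⟨-|β|, ?_⟩
    rintro x ⟨ν, ⟨hν0, hν1⟩, rfl⟩
    have h1 : -|β| ≤ ν * β := by
      nlinarith [neg_abs_le β, le_abs_self β, abs_nonneg β]
    have h2 : 0 ≤ (1 / 2) * ‖ν • g + (1 - ν) • (p + Δ)‖ ^ 2 := by positivity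
    have h3 : 0 ≤ (1 - ν) * α := mul_nonneg (by linarith) hα
    simp only []
    linarith
  -- key bound for any ν ∈ [0,1]
  have hkey : ∀ ν : ℝ, 0 ≤ ν → ν ≤ 1 →
      (1 / 2) * ‖ν • g + (1 - ν) • (p + Δ)‖ ^ 2 + ν * β + (1 - ν) * α ≤
      w - ν * (1 - m) * w + 2 * ν ^ 2 * c ^ 2 + c * ‖Δ‖ + (1 / 2) * ‖Δ‖ ^ 2 := by
    intro ν hν0 hν1
    set u : EuclideanSpace ℝ (Fin n) := ν • g + (1 - ν) • p with hu
    have hdecomp : ν • g + (1 - ν) • (p + Δ) = u + (1 - ν) • Δ := by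
      rw [hu]; module
    have hnu : ‖ν • g + (1 - ν) • (p + Δ)‖ ≤ ‖u‖ + ‖Δ‖ := by
      rw [hdecomp]
      refine le_trans (norm_add_le _ _) ?_
      have : ‖(1 - ν) • Δ‖ = |1 - ν| * ‖Δ‖ := norm_smul _ _
      rw [this, abs_of_nonneg (by linarith)]
      nlinarith [norm_nonneg Δ]
    have hua : ‖u‖ ≤ c := by
      refine le_trans (norm_add_le _ _) ?_
      rw [norm_smul, norm_smul, Real.norm_eq_abs, Real.norm_eq_abs,
        abs_of_nonneg hν0, abs_of_nonneg (by linarith : (0:ℝ) ≤ 1 - ν)]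
      nlinarith
    have husq : ‖u‖ ^ 2 = ‖p‖ ^ 2 + 2 * ν * (⟪p, g⟫ - ‖p‖ ^ 2) + ν ^ 2 * ‖g - p‖ ^ 2 := by
      have hu' : u = p + ν • (g - p) := by rw [hu]; module
      rw [hu', norm_add_sq_real, real_inner_smul_right, norm_smul,
        Real.norm_eq_abs, abs_of_nonneg hν0, inner_sub_right,
        real_inner_self_eq_norm_sq]
      ring
    have hgp : ‖g - p‖ ^ 2 ≤ 4 * c ^ 2 := by
      have h2c : ‖g - p‖ ≤ 2 * c := le_trans (norm_sub_le g p) (by linarith)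
      have := pow_le_pow_left₀ (norm_nonneg (g - p)) h2c 2
      nlinarith
    have hL : ⟪p, g⟫ - ‖p‖ ^ 2 + β - α ≤ -((1 - m) * w) := by
      rw [real_inner_comm]
      rw [hv] at hβ
      have key : β + ⟪g, p⟫ ≤ m * (‖p‖ ^ 2 + α) := by nlinarith [hβ]
      have hf : 0 ≤ (1 - m) * ‖p‖ ^ 2 :=
        mul_nonneg (by linarith) (sq_nonneg ‖p‖)
      rw [hw]
      nlinarith [key, hf]
    have hsq2 : ‖ν • g + (1 - ν) • (p + Δ)‖ ^ 2 ≤ (‖u‖ + ‖Δ‖) ^ 2 :=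
      pow_le_pow_left₀ (norm_nonneg _) hnu 2
    have e1 : ν * (⟪p, g⟫ - ‖p‖ ^ 2 + β - α) ≤ ν * -((1 - m) * w) :=
      mul_le_mul_of_nonneg_left hL hν0
    have e2 : ν ^ 2 * ‖g - p‖ ^ 2 ≤ ν ^ 2 * (4 * c ^ 2) :=
      mul_le_mul_of_nonneg_left hgp (sq_nonneg ν)
    have e3 : ‖u‖ * ‖Δ‖ ≤ c * ‖Δ‖ := mul_le_mul_of_nonneg_right hua (norm_nonneg Δ)
    linarith [hsq2, husq, e1, e2, e3, hw, sq_nonneg (‖u‖ + ‖Δ‖)]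
  -- choose the minimizer candidate
  set ν₀ : ℝ := (1 - m) * w / (4 * c ^ 2) with hν₀
  have hν₀0 : 0 ≤ ν₀ := by
    apply div_nonneg
    · nlinarith
    · positivity
  have hν₀1 : ν₀ ≤ 1 := by
    rcases eq_or_lt_of_le hc0 with h | h
    · rw [hν₀, ← h]; norm_num
    · rw [hν₀, div_le_one (by positivity)]
      nlinarith [sq_nonneg ‖p‖, hpc, norm_nonneg p]
  have hmem : (1 / 2) * ‖ν₀ • g + (1 - ν₀) • (p + Δ)‖ ^ 2 + ν₀ * β + (1 - ν₀) * α ∈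
      ((fun ν : ℝ =>
        (1 / 2) * ‖ν • g + (1 - ν) • (p + Δ)‖ ^ 2 + ν * β + (1 - ν) * α) ''
      Set.Icc 0 1) := ⟨ν₀, ⟨hν₀0, hν₀1⟩, rfl⟩
  refine le_trans (csInf_le hbdd hmem) (le_trans (hkey ν₀ hν₀0 hν₀1) ?_)
  rcases eq_or_lt_of_le hc0 with h | h
  · -- c = 0 case
    have hc2 : c ^ 2 = 0 := by rw [← h]; ring
    have hwz : w = 0 := by
      have hp0 : ‖p‖ ≤ 0 := h ▸ hpc
      have := norm_nonneg p
      nlinarith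
    rw [hν₀, hwz, hc2, ← h]
    norm_num
  · have hν₀' : ν₀ * (1 - m) * w = w ^ 2 * (1 - m) ^ 2 / (4 * c ^ 2) := by
      rw [hν₀]; field_simp
    have hν₀'' : 2 * ν₀ ^ 2 * c ^ 2 = w ^ 2 * (1 - m) ^ 2 / (8 * c ^ 2) := by
      rw [hν₀]; field_simp; ring
    rw [hν₀', hν₀'']
    have h1 : w ^ 2 * (1 - m) ^ 2 / (4 * c ^ 2) = 2 * (w ^ 2 * (1 - m) ^ 2 / (8 * c ^ 2)) := by
      field_simp; ring
    have h2 : 0 ≤ c * ‖Δ‖ := mul_nonneg hc0 (norm_nonneg Δ)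
    linarith
end
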